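/- Let P be an n-type with full support on an alphabet of size k (i.e., nP(a) is a positive integer for each a). Then the size of the type class satisfies |T(P)| ≍_k (2^{nH(P)} / n^{(k−1)/2}) · Π_{a} P(a)^{−1/2}, i.e., there exist constants c(k), C(k) > 0 depending only on k such that c(k)·(2^{nH(P)}/n^{(k−1)/2})·Π_a P(a)^{−1/2} ≤ |T(P)| ≤ C(k)·(2^{nH(P)}/n^{(k−1)/2})·Π_a P(a)^{−1/2}. -/

import Mathlib

open Finset

section auxiliary

open Nat

private lemma tc_fiber_card_comp_perm {n k : ℕ} (x : Fin n → Fin k) (g : Equiv.Perm (Fin n))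
    (a : Fin k) :
    (univ.filter (fun i => x (g i) = a)).card = (univ.filter (fun i => x i = a)).card := by
  rw [← Fintype.card_subtype, ← Fintype.card_subtype]
  exact Fintype.card_congr (Equiv.subtypeEquiv g (fun i => Iff.rfl))

private lemma tc_count {n k : ℕ} (m : Fin k → ℕ) (hm : ∑ a, m a = n) :
    ((univ.filter (fun x : Fin n → Fin k =>
        ∀ a, (univ.filter (fun i => x i = a)).card = m a)).card) * (∏ a, (m a)!) = n ! := by
  classical
  have hcard : Fintype.card (Σ a : Fin k, Fin (m a)) = n := by simp [hm]
  let e : (Σ a : Fin k, Fin (m a)) ≃ Fin n := Fintype.equivFinOfCardEq hcard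
  set x₀ : Fin n → Fin k := fun i => (e.symm i).1 with hx₀
  have hfiber : ∀ a, (univ.filter (fun i => x₀ i = a)).card = m a := by
    intro a
    rw [← Fintype.card_subtype]
    have e1 : {i : Fin n // x₀ i = a} ≃ {s : Σ b : Fin k, Fin (m b) // s.1 = a} :=
      (Equiv.subtypeEquiv e.symm (fun i => Iff.rfl))
    have e2 : {s : Σ b : Fin k, Fin (m b) // s.1 = a} ≃ Fin (m a) :=
      { toFun := fun s => Fin.cast (congrArg m s.2) s.1.2
        invFun := fun x => ⟨⟨a, x⟩, rfl⟩
        left_inv := by rintro ⟨⟨b, x⟩, rfl⟩; rfl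
        right_inv := fun x => rfl }
    rw [Fintype.card_congr (e1.trans e2), Fintype.card_fin]
  set S := univ.filter (fun x : Fin n → Fin k =>
      ∀ a, (univ.filter (fun i => x i = a)).card = m a) with hS
  have key : (univ : Finset (Equiv.Perm (Fin n))).card = ∑ y ∈ S, (∏ a, (m a)!) := by
    rw [Finset.card_eq_sum_card_fiberwise (f := fun g : Equiv.Perm (Fin n) => x₀ ∘ g)
        (t := S) ?mem]
    case mem =>
      intro g _
      simp only [hS, mem_coe, mem_filter, mem_univ, true_and]
      intro a
      simpa [Function.comp] using (tc_fiber_card_comp_perm x₀ g a).trans (hfiber a)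
    refine Finset.sum_congr rfl (fun y hy => ?_)
    simp only [hS, mem_filter, mem_univ, true_and] at hy
    have hec : ∀ a, Fintype.card {i : Fin n // y i = a} = Fintype.card {i : Fin n // x₀ i = a} := by
      intro a
      rw [Fintype.card_subtype, Fintype.card_subtype, hy a, hfiber a]
    let ea : ∀ a, {i : Fin n // y i = a} ≃ {i : Fin n // x₀ i = a} :=
      fun a => Fintype.equivOfCardEq (hec a)
    let g₀ : Equiv.Perm (Fin n) :=
      (Equiv.sigmaFiberEquiv y).symm.trans ((Equiv.sigmaCongrRight ea).trans
        (Equiv.sigmaFiberEquiv x₀))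
    have hg₀ : x₀ ∘ g₀ = y := by
      funext i
      exact (ea (y i) ⟨i, rfl⟩).2
    have hbij : (univ.filter (fun g : Equiv.Perm (Fin n) => x₀ ∘ g = y)).card
        = (univ.filter (fun h : Equiv.Perm (Fin n) => x₀ ∘ h = x₀)).card := by
      apply Finset.card_bij' (fun g _ => g * g₀⁻¹) (fun h _ => h * g₀)
      · intro g hg
        simp only [mem_filter, mem_univ, true_and] at hg ⊢
        funext i
        have h1 : x₀ (g (g₀⁻¹ i)) = y (g₀⁻¹ i) := congrFun hg (g₀⁻¹ i)
        have h2 : y (g₀⁻¹ i) = x₀ i := by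
          conv_rhs => rw [← Equiv.apply_symm_apply g₀ i]
          exact (congrFun hg₀ (g₀⁻¹ i)).symm
        simpa [Equiv.Perm.mul_apply] using h1.trans h2
      · intro h hh
        simp only [mem_filter, mem_univ, true_and] at hh ⊢
        funext i
        have h1 : x₀ (h (g₀ i)) = x₀ (g₀ i) := congrFun hh (g₀ i)
        show x₀ (h (g₀ i)) = y i
        rw [h1]
        exact congrFun hg₀ i
      · intro g _; simp [mul_assoc]
      · intro h _; simp [mul_assoc]
    rw [hbij]
    have hcc : (univ.filter (fun h : Equiv.Perm (Fin n) => x₀ ∘ h = x₀)).card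
        = Fintype.card {h : Equiv.Perm (Fin n) // x₀ ∘ h = x₀} := (Fintype.card_subtype _).symm
    rw [hcc, DomMulAct.stabilizer_card x₀]
    refine Finset.prod_congr rfl (fun a _ => ?_)
    rw [Fintype.card_subtype, hfiber a]
  have hperm : (univ : Finset (Equiv.Perm (Fin n))).card = n ! := by
    rw [Finset.card_univ, Fintype.card_perm, Fintype.card_fin]
  rw [← hperm, key, Finset.sum_const, smul_eq_mul]

private lemma tc_rpow_two_sum {k : ℕ} (t : Fin k → ℝ) :
    (2:ℝ) ^ (∑ a, t a) = ∏ a, (2:ℝ) ^ (t a) := by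
  rw [Real.rpow_def_of_pos two_pos, Finset.mul_sum, Real.exp_sum]
  exact Finset.prod_congr rfl fun a _ => (Real.rpow_def_of_pos two_pos _).symm

private lemma tc_D_identity {k n : ℕ} (hn : 0 < n) (P : Fin k → ℝ) (m : Fin k → ℕ)
    (hP : ∀ a, 0 < P a) (hm : ∀ a, (m a : ℝ) = n * P a) (hsm : ∑ a, m a = n) :
    (Real.sqrt (2*n) * ((n:ℝ)/Real.exp 1)^n) /
      ∏ a, (Real.sqrt (2*(m a : ℝ)) * (((m a):ℝ)/Real.exp 1)^(m a))
    = (2:ℝ) ^ (((1:ℝ) - k)/2) *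
      ((2 : ℝ) ^ ((n : ℝ) * (-∑ a, P a * Real.logb 2 (P a))) /
        (n : ℝ) ^ (((k : ℝ) - 1) / 2) * ∏ a, (P a) ^ (-(1/2) : ℝ)) := by
  have hnR : (0:ℝ) < n := by exact_mod_cast hn
  have hB : ∏ a, (((m a):ℝ)/Real.exp 1)^(m a)
      = ((n:ℝ)/Real.exp 1)^n * ∏ a, (P a)^(m a) := by
    have hpow : ∏ a, ((n:ℝ)/Real.exp 1)^(m a) = ((n:ℝ)/Real.exp 1)^n := by
      rw [Finset.prod_pow_eq_pow_sum, hsm]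
    rw [← hpow, ← Finset.prod_mul_distrib]
    refine Finset.prod_congr rfl fun a _ => ?_
    rw [← mul_pow]
    congr 1
    rw [hm a]; ring
  have h2H : (2 : ℝ) ^ ((n : ℝ) * (-∑ a, P a * Real.logb 2 (P a)))
      = (∏ a, (P a)^(m a))⁻¹ := by
    have hexp : (n : ℝ) * (-∑ a, P a * Real.logb 2 (P a))
        = ∑ a, Real.logb 2 (P a) * (-(m a : ℝ)) := by
      rw [mul_neg, Finset.mul_sum, ← Finset.sum_neg_distrib]
      refine Finset.sum_congr rfl fun a _ => ?_
      rw [hm a]; ring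
    rw [hexp, tc_rpow_two_sum, ← Finset.prod_inv_distrib]
    refine Finset.prod_congr rfl fun a _ => ?_
    rw [Real.rpow_mul (by norm_num : (0:ℝ) ≤ 2), Real.rpow_logb two_pos (by norm_num) (hP a),
      Real.rpow_neg (hP a).le, Real.rpow_natCast]
  have hA : ∏ a, Real.sqrt (2*(m a : ℝ))
      = (Real.sqrt 2)^k * (Real.sqrt n)^k * ∏ a, Real.sqrt (P a) := by
    have hsq : ∀ a : Fin k, Real.sqrt (2*(m a : ℝ))
        = Real.sqrt 2 * Real.sqrt n * Real.sqrt (P a) := by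
      intro a
      rw [hm a, ← mul_assoc, Real.sqrt_mul (by positivity), Real.sqrt_mul (by norm_num)]
    rw [Finset.prod_congr rfl (fun a _ => hsq a), Finset.prod_mul_distrib,
      Finset.prod_const, Finset.card_univ, Fintype.card_fin, mul_pow]
  have h2k : (2:ℝ) ^ (((1:ℝ) - k)/2) = Real.sqrt 2 / (Real.sqrt 2)^k := by
    have hh : ((1:ℝ) - k)/2 = 1/2 + (1/2) * (-(k:ℝ)) := by ring
    rw [hh, Real.rpow_add two_pos, Real.rpow_mul (by norm_num : (0:ℝ) ≤ 2),
      Real.rpow_neg (by positivity), Real.rpow_natCast, ← Real.sqrt_eq_rpow, div_eq_mul_inv]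
  have hnk : (n:ℝ) ^ (((k:ℝ) - 1)/2) = (Real.sqrt n)^k / Real.sqrt n := by
    have hh : ((k:ℝ) - 1)/2 = (1/2) * (k:ℝ) + (1/2) * (-(1:ℝ)) := by ring
    rw [hh, Real.rpow_add hnR, Real.rpow_mul hnR.le, Real.rpow_mul hnR.le,
      Real.rpow_natCast, ← Real.sqrt_eq_rpow, Real.rpow_neg (Real.sqrt_nonneg _),
      Real.rpow_one, div_eq_mul_inv]
  have hPk : ∏ a, (P a) ^ (-(1/2) : ℝ) = (∏ a, Real.sqrt (P a))⁻¹ := by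
    rw [← Finset.prod_inv_distrib]
    refine Finset.prod_congr rfl fun a _ => ?_
    rw [Real.rpow_neg (hP a).le, ← Real.sqrt_eq_rpow]
  have h2n : Real.sqrt (2*(n:ℝ)) = Real.sqrt 2 * Real.sqrt n :=
    Real.sqrt_mul (by norm_num) _
  rw [Finset.prod_mul_distrib, hA, hB, h2H, h2k, hnk, hPk, h2n]
  have hs2 : (0:ℝ) < Real.sqrt 2 := by positivity
  have hsn : (0:ℝ) < Real.sqrt n := Real.sqrt_pos.mpr hnR
  have hQ : (0:ℝ) < ∏ a, Real.sqrt (P a) :=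
    Finset.prod_pos fun a _ => Real.sqrt_pos.mpr (hP a)
  have hE : (0:ℝ) < ((n:ℝ)/Real.exp 1)^n := by positivity
  have hM : (0:ℝ) < ∏ a, (P a)^(m a) :=
    Finset.prod_pos fun a _ => pow_pos (hP a) _
  field_simp

private lemma tc_fact_eq (j : ℕ) (hj : 1 ≤ j) :
    (j ! : ℝ) = Stirling.stirlingSeq j * (Real.sqrt (2*(j:ℝ)) * ((j:ℝ)/Real.exp 1)^j) := by
  have hjR : (0:ℝ) < j := by exact_mod_cast hj
  have hD : (0:ℝ) < Real.sqrt (2*(j:ℝ)) * ((j:ℝ)/Real.exp 1)^j := by positivity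
  rw [Stirling.stirlingSeq, div_mul_cancel₀ _ (ne_of_gt hD)]

end auxiliary

/-- Size of type classes: for an `n`-type `P` with full support on an alphabet of
size `k`, `|T(P)| ≍_k 2^{nH(P)} n^{-(k-1)/2} ∏_a P(a)^{-1/2}`, with constants
depending only on `k`. -/
theorem type_class_size (k : ℕ) (hk : 0 < k) :
    ∃ c C : ℝ, 0 < c ∧ 0 < C ∧
      ∀ (n : ℕ), 0 < n → ∀ P : Fin k → ℝ,
        (∀ a, 0 < P a) → (∑ a, P a = 1) →
        (∀ a, ∃ m : ℕ, (P a : ℝ) = (m : ℝ) / n) →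
        (c * ((2 : ℝ) ^ ((n : ℝ) * (-∑ a, P a * Real.logb 2 (P a))) /
              (n : ℝ) ^ (((k : ℝ) - 1) / 2) * ∏ a, (P a) ^ (-(1/2) : ℝ))
            ≤ ((univ.filter (fun x : Fin n → Fin k =>
                ∀ a, ((univ.filter (fun i => x i = a)).card : ℝ) = n * P a)).card : ℝ)) ∧
        (((univ.filter (fun x : Fin n → Fin k =>
              ∀ a, ((univ.filter (fun i => x i = a)).card : ℝ) = n * P a)).card : ℝ)
            ≤ C * ((2 : ℝ) ^ ((n : ℝ) * (-∑ a, P a * Real.logb 2 (P a))) /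
              (n : ℝ) ^ (((k : ℝ) - 1) / 2) * ∏ a, (P a) ^ (-(1/2) : ℝ))) := by
  classical
  obtain ⟨a₀, ha₀, hlow⟩ := Stirling.stirlingSeq'_bounded_by_pos_constant
  set b₀ : ℝ := Stirling.stirlingSeq 1 with hb₀def
  have hb₀ : 0 < b₀ := Stirling.stirlingSeq'_pos 0
  have hlow' : ∀ j : ℕ, 1 ≤ j → a₀ ≤ Stirling.stirlingSeq j := by
    intro j hj
    obtain ⟨j', rfl⟩ := Nat.exists_eq_add_of_le hj
    rw [Nat.add_comm]
    exact hlow j'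
  have hub' : ∀ j : ℕ, 1 ≤ j → Stirling.stirlingSeq j ≤ b₀ := by
    intro j hj
    obtain ⟨j', rfl⟩ := Nat.exists_eq_add_of_le hj
    rw [Nat.add_comm]
    exact Stirling.stirlingSeq'_antitone (Nat.zero_le j')
  refine ⟨(a₀ / b₀^k) * (2:ℝ) ^ (((1:ℝ) - k)/2), (b₀ / a₀^k) * (2:ℝ) ^ (((1:ℝ) - k)/2),
    by positivity, by positivity, ?_⟩
  intro n hn P hPpos hPsum hPint
  have hnR : (0:ℝ) < n := by exact_mod_cast hn
  choose m hm using hPint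
  have hmR : ∀ a, (m a : ℝ) = n * P a := by
    intro a
    rw [hm a]
    field_simp
  have hm1 : ∀ a, 1 ≤ m a := by
    intro a
    rcases Nat.eq_zero_or_pos (m a) with h | h
    · exfalso
      have h1 := hmR a
      rw [h] at h1
      norm_num at h1
      rcases h1 with h1 | h1
      · omega
      · exact absurd h1 (ne_of_gt (hPpos a))
    · exact h
  have hsm : ∑ a, m a = n := by
    have hcast : ((∑ a, m a : ℕ) : ℝ) = (n : ℝ) := by
      push_cast
      rw [Finset.sum_congr rfl (fun a _ => hmR a), ← Finset.mul_sum, hPsum, mul_one]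
    exact_mod_cast hcast
  -- identify the filter set with the nat-valued one
  have hSeq : (univ.filter (fun x : Fin n → Fin k =>
        ∀ a, ((univ.filter (fun i => x i = a)).card : ℝ) = n * P a))
      = (univ.filter (fun x : Fin n → Fin k =>
        ∀ a, (univ.filter (fun i => x i = a)).card = m a)) := by
    refine Finset.filter_congr (fun x _ => ?_)
    refine forall_congr' (fun a => ?_)
    rw [← hmR a]
    exact ⟨fun h => Nat.cast_injective h, fun h => by rw [h]⟩
  rw [hSeq]
  set M : ℕ := (univ.filter (fun x : Fin n → Fin k =>
        ∀ a, (univ.filter (fun i => x i = a)).card = m a)).card with hMdef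
  have hcount : (M : ℝ) * ∏ a, ((m a).factorial : ℝ) = (n.factorial : ℝ) := by
    have := tc_count m hsm
    exact_mod_cast congrArg (Nat.cast : ℕ → ℝ) this
  -- factorials via Stirling
  set D : ℕ → ℝ := fun j => Real.sqrt (2*(j:ℝ)) * ((j:ℝ)/Real.exp 1)^j with hDdef
  have hDpos : ∀ j : ℕ, 1 ≤ j → 0 < D j := by
    intro j hj
    have : (0:ℝ) < j := by exact_mod_cast hj
    simp only [hDdef]
    positivity
  have hspos : ∀ j : ℕ, 1 ≤ j → 0 < Stirling.stirlingSeq j := fun j hj =>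
    lt_of_lt_of_le ha₀ (hlow' j hj)
  have hprod : ∏ a, ((m a).factorial : ℝ)
      = (∏ a, Stirling.stirlingSeq (m a)) * ∏ a, D (m a) := by
    rw [← Finset.prod_mul_distrib]
    exact Finset.prod_congr rfl fun a _ => tc_fact_eq (m a) (hm1 a)
  have hMeq : (M : ℝ) = (Stirling.stirlingSeq n / ∏ a, Stirling.stirlingSeq (m a))
      * (D n / ∏ a, D (m a)) := by
    have hsprod : (0:ℝ) < ∏ a, Stirling.stirlingSeq (m a) :=
      Finset.prod_pos fun a _ => hspos (m a) (hm1 a)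
    have hDprod : (0:ℝ) < ∏ a, D (m a) :=
      Finset.prod_pos fun a _ => hDpos (m a) (hm1 a)
    have hnfact : (n.factorial : ℝ) = Stirling.stirlingSeq n * D n := tc_fact_eq n hn
    rw [hnfact, hprod] at hcount
    field_simp at hcount ⊢
    linarith [hcount]
  have hident : D n / ∏ a, D (m a)
      = (2:ℝ) ^ (((1:ℝ) - k)/2) *
        ((2 : ℝ) ^ ((n : ℝ) * (-∑ a, P a * Real.logb 2 (P a))) /
          (n : ℝ) ^ (((k : ℝ) - 1) / 2) * ∏ a, (P a) ^ (-(1/2) : ℝ)) :=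
    tc_D_identity hn P m hPpos hmR hsm
  set F : ℝ := (2 : ℝ) ^ ((n : ℝ) * (-∑ a, P a * Real.logb 2 (P a))) /
      (n : ℝ) ^ (((k : ℝ) - 1) / 2) * ∏ a, (P a) ^ (-(1/2) : ℝ) with hFdef
  have hFpos : 0 < F := by
    have h1 : (0:ℝ) < (2 : ℝ) ^ ((n : ℝ) * (-∑ a, P a * Real.logb 2 (P a))) :=
      Real.rpow_pos_of_pos two_pos _
    have h2 : (0:ℝ) < (n : ℝ) ^ (((k : ℝ) - 1) / 2) := Real.rpow_pos_of_pos hnR _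
    have h3 : (0:ℝ) < ∏ a, (P a) ^ (-(1/2) : ℝ) :=
      Finset.prod_pos fun a _ => Real.rpow_pos_of_pos (hPpos a) _
    exact mul_pos (div_pos h1 h2) h3
  -- bounds on the Stirling ratio
  have hsprod : (0:ℝ) < ∏ a, Stirling.stirlingSeq (m a) :=
    Finset.prod_pos fun a _ => hspos (m a) (hm1 a)
  have hsub : (∏ a, Stirling.stirlingSeq (m a)) ≤ b₀^k := by
    calc (∏ a, Stirling.stirlingSeq (m a)) ≤ ∏ _a : Fin k, b₀ :=
          Finset.prod_le_prod (fun a _ => (hspos (m a) (hm1 a)).le)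
            (fun a _ => hub' (m a) (hm1 a))
      _ = b₀^k := by rw [Finset.prod_const, Finset.card_univ, Fintype.card_fin]
  have hslb : a₀^k ≤ ∏ a, Stirling.stirlingSeq (m a) := by
    calc a₀^k = ∏ _a : Fin k, a₀ := by
          rw [Finset.prod_const, Finset.card_univ, Fintype.card_fin]
      _ ≤ ∏ a, Stirling.stirlingSeq (m a) :=
          Finset.prod_le_prod (fun a _ => ha₀.le) (fun a _ => hlow' (m a) (hm1 a))
  have hRlb : a₀ / b₀^k ≤ Stirling.stirlingSeq n / ∏ a, Stirling.stirlingSeq (m a) :=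
    div_le_div₀ (hspos n hn).le (hlow' n hn) (by positivity) hsub
  have hRub : Stirling.stirlingSeq n / ∏ a, Stirling.stirlingSeq (m a) ≤ b₀ / a₀^k :=
    div_le_div₀ hb₀.le (hub' n hn) (by positivity) hslb
  have hG : (0:ℝ) ≤ (2:ℝ) ^ (((1:ℝ) - k)/2) * F :=
    (mul_pos (Real.rpow_pos_of_pos two_pos _) hFpos).le
  constructor
  · calc (a₀ / b₀^k) * (2:ℝ) ^ (((1:ℝ) - k)/2) * F
        = (a₀ / b₀^k) * ((2:ℝ) ^ (((1:ℝ) - k)/2) * F) := by ring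
      _ ≤ (Stirling.stirlingSeq n / ∏ a, Stirling.stirlingSeq (m a))
            * ((2:ℝ) ^ (((1:ℝ) - k)/2) * F) := mul_le_mul_of_nonneg_right hRlb hG
      _ = (M : ℝ) := by rw [hMeq, hident]
  · calc (M : ℝ) = (Stirling.stirlingSeq n / ∏ a, Stirling.stirlingSeq (m a))
            * ((2:ℝ) ^ (((1:ℝ) - k)/2) * F) := by rw [hMeq, hident]
      _ ≤ (b₀ / a₀^k) * ((2:ℝ) ^ (((1:ℝ) - k)/2) * F) := mul_le_mul_of_nonneg_right hRub hG
      _ = (b₀ / a₀^k) * (2:ℝ) ^ (((1:ℝ) - k)/2) * F := by ring
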